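/- Let S be a commutative valuation ring (ideals totally ordered by inclusion, not necessarily a domain) and R a ring with a homomorphism f : S → R (not necessarily unital) whose image lies in the center of R. Then f satisfies strong going between: for primes P₁ ⊊ P₂ ⊊ P₃ of S and primes Q₁ ⊊ Q₃ of R with f⁻¹(Q₁) = P₁, f⁻¹(Q₃) = P₃, there exists a prime Q₂ of R with Q₁ ⊊ Q₂ ⊊ Q₃ and f⁻¹(Q₂) = P₂. -/
import Mathlib


/-- A (left) ideal of a possibly noncommutative ring is two-sided. -/
def IsTwoSidedI {R : Type*} [Ring R] (Q : Ideal R) : Prop :=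
  ∀ a ∈ Q, ∀ r : R, a * r ∈ Q

/-- Primeness for two-sided ideals of a possibly noncommutative ring. -/
def IsPrimeNC {R : Type*} [Ring R] (Q : Ideal R) : Prop :=
  Q ≠ ⊤ ∧ ∀ x y : R, (∀ r : R, x * r * y ∈ Q) → x ∈ Q ∨ y ∈ Q

/-- The preimage `f⁻¹(Q)` of an ideal along a (not necessarily unital) ring
homomorphism, as an ideal. -/
def preimageIdeal {S R : Type*} [Ring S] [Ring R] (f : S →ₙ+* R) (Q : Ideal R) :
    Ideal S where
  carrier := f ⁻¹' Q
  add_mem' ha hb := by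
    simp only [Set.mem_preimage, map_add] at *
    exact Q.add_mem ha hb
  zero_mem' := by simp only [Set.mem_preimage, map_zero]; exact Q.zero_mem
  smul_mem' c x hx := by
    simp only [Set.mem_preimage, smul_eq_mul, map_mul] at *
    exact Q.mul_mem_left _ hx

lemma mem_preimageIdeal {S R : Type*} [Ring S] [Ring R] (f : S →ₙ+* R) (Q : Ideal R)
    {x : S} : x ∈ preimageIdeal f Q ↔ f x ∈ Q := Iff.rfl

/-- Pulling a central element out of a product. -/
lemma central_pull {R : Type*} [Ring R] {t : R} (ht : ∀ r : R, t * r = r * t) (x c : R) :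
    x * (t * c) = t * (x * c) := by rw [← mul_assoc, ← ht x, mul_assoc]

/-- The ideal `Q₁ + R·f(P₂)`; thanks to the valuation hypothesis every element
has the normal form `q + r * f p` with `q ∈ Q₁`, `p ∈ P₂`. -/
def sgbA {S R : Type*} [CommRing S] [Ring R] (f : S →ₙ+* R) (Q₁ : Ideal R) (P₂ : Ideal S)
    (hval : ∀ I J : Ideal S, I ≤ J ∨ J ≤ I)
    (hc : ∀ (s : S) (r : R), f s * r = r * f s) : Ideal R where
  carrier := {x | ∃ q ∈ (Q₁ : Set R), ∃ r : R, ∃ p ∈ P₂, x = q + r * f p}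
  zero_mem' := ⟨0, Q₁.zero_mem, 0, 0, P₂.zero_mem, by simp⟩
  add_mem' := by
    rintro a b ⟨q, hq, r, p, hp, rfl⟩ ⟨q', hq', r', p', hp', rfl⟩
    rcases hval (Ideal.span {p}) (Ideal.span {p'}) with h | h
    · obtain ⟨u, rfl⟩ := Ideal.mem_span_singleton.mp (h (Ideal.mem_span_singleton_self p))
      refine ⟨q + q', Q₁.add_mem hq hq', r * f u + r', p', hp', ?_⟩
      rw [map_mul, add_mul, hc p' (f u), ← mul_assoc]
      abel
    · obtain ⟨u, rfl⟩ := Ideal.mem_span_singleton.mp (h (Ideal.mem_span_singleton_self p'))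
      refine ⟨q + q', Q₁.add_mem hq hq', r + r' * f u, p, hp, ?_⟩
      rw [map_mul, add_mul, hc p (f u), ← mul_assoc]
      abel
  smul_mem' := by
    rintro a x ⟨q, hq, r, p, hp, rfl⟩
    exact ⟨a * q, Q₁.mul_mem_left a hq, a * r, p, hp, by rw [smul_eq_mul, mul_add, mul_assoc]⟩

/-- **SGB.** Let `S` be a commutative valuation ring (ideals totally
ordered by inclusion, not necessarily a domain), `R` a ring as above, and
`f : S → R` a (not necessarily unital) homomorphism with central image.  Then `f`
satisfies strong going between. -/
theorem stmt12 {S R : Type*} [CommRing S] [Ring R]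
    (hval : ∀ I J : Ideal S, I ≤ J ∨ J ≤ I)
    (f : S →ₙ+* R) (hcentral : ∀ s : S, f s ∈ Set.center R)
    (P₁ P₂ P₃ : Ideal S) (hP₁ : P₁.IsPrime) (hP₂ : P₂.IsPrime) (hP₃ : P₃.IsPrime)
    (h12 : P₁ < P₂) (h23 : P₂ < P₃)
    (Q₁ Q₃ : Ideal R) (hQ₁ts : IsTwoSidedI Q₁) (hQ₁ : IsPrimeNC Q₁)
    (hQ₃ts : IsTwoSidedI Q₃) (hQ₃ : IsPrimeNC Q₃) (hQ : Q₁ < Q₃)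
    (hover₁ : preimageIdeal f Q₁ = P₁) (hover₃ : preimageIdeal f Q₃ = P₃) :
    ∃ Q₂ : Ideal R, IsTwoSidedI Q₂ ∧ IsPrimeNC Q₂ ∧ Q₁ < Q₂ ∧ Q₂ < Q₃ ∧
      preimageIdeal f Q₂ = P₂ := by
  have hc : ∀ (s : S) (r : R), f s * r = r * f s :=
    fun s r => (Set.mem_center_iff.mp (hcentral s)).comm r
  have hone₃ : (1 : R) ∉ Q₃ := (Ideal.ne_top_iff_one Q₃).mp hQ₃.1
  have hfQ₃ : ∀ {p : S}, p ∈ P₃ → f p ∈ Q₃ := by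
    intro p hp
    rw [← hover₃] at hp
    exact hp
  -- the m-system
  set M : Set R := {x | ∃ c, c ∉ Q₃ ∧ (x = c ∨ ∃ s, s ∉ P₂ ∧ x = f s * c)} with hMdef
  have hM : ∀ m₁ ∈ M, ∀ m₂ ∈ M, ∃ r : R, m₁ * r * m₂ ∈ M := by
    rintro m₁ ⟨c₁, hc₁, h1⟩ m₂ ⟨c₂, hc₂, h2⟩
    have : ∃ r : R, c₁ * r * c₂ ∉ Q₃ := by
      by_contra hall
      push_neg at hall
      rcases hQ₃.2 c₁ c₂ hall with h | h
      · exact hc₁ h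
      · exact hc₂ h
    obtain ⟨r, hr⟩ := this
    refine ⟨r, ?_⟩
    rcases h1 with h1 | ⟨s₁, hs₁, h1⟩ <;> rcases h2 with h2 | ⟨s₂, hs₂, h2⟩ <;>
      rw [h1, h2]
    · exact ⟨c₁ * r * c₂, hr, Or.inl rfl⟩
    · exact ⟨c₁ * r * c₂, hr, Or.inr ⟨s₂, hs₂, central_pull (hc s₂) (c₁ * r) c₂⟩⟩
    · refine ⟨c₁ * r * c₂, hr, Or.inr ⟨s₁, hs₁, ?_⟩⟩
      rw [mul_assoc (f s₁) c₁ r, mul_assoc]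
    · refine ⟨c₁ * r * c₂, hr, Or.inr ⟨s₁ * s₂, fun hmem =>
        (hP₂.mem_or_mem hmem).elim hs₁ hs₂, ?_⟩⟩
      rw [map_mul, mul_assoc (f s₁) c₁ r, mul_assoc (f s₁) (c₁ * r),
        central_pull (hc s₂) (c₁ * r) c₂, ← mul_assoc]
  set A₀ : Ideal R := sgbA f Q₁ P₂ hval hc with hA₀def
  have hA₀ts : IsTwoSidedI A₀ := by
    rintro a ⟨q, hq, r, p, hp, rfl⟩ t
    exact ⟨q * t, hQ₁ts q hq t, r * t, p, hp, by
      rw [add_mul, mul_assoc, hc p t, ← mul_assoc]⟩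
  have hA₀disj : ∀ m ∈ M, m ∉ A₀ := by
    rintro m ⟨c, hcQ₃, hm⟩ ⟨q, hq, r, p, hp, hEq⟩
    rcases hm with rfl | ⟨s, hs, rfl⟩
    · exact hcQ₃ (hEq ▸ Q₃.add_mem (hQ.le hq) (Q₃.mul_mem_left r (hfQ₃ (h23.le hp))))
    · rcases hval (Ideal.span {s}) (Ideal.span {p}) with h | h
      · obtain ⟨u, rfl⟩ := Ideal.mem_span_singleton.mp (h (Ideal.mem_span_singleton_self s))
        exact hs (P₂.mul_mem_right u hp)
      · obtain ⟨u, hpu⟩ := Ideal.mem_span_singleton.mp (h (Ideal.mem_span_singleton_self p))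
        have hu : u ∈ P₂ := by
          rcases hP₂.mem_or_mem (show s * u ∈ P₂ from hpu ▸ hp) with h' | h'
          · exact absurd h' hs
          · exact h'
        have key : f s * (c - r * f u) ∈ Q₁ := by
          have heq2 : f s * (c - r * f u) = q := by
            rw [mul_sub]
            rw [show f s * (r * f u) = r * f p by
              rw [hpu, map_mul, central_pull (hc s) r (f u)]]
            rw [hEq]
            abel
          rw [heq2]; exact hq
        have hall : ∀ t : R, f s * t * (c - r * f u) ∈ Q₁ := by
          intro t
          rw [hc s t, mul_assoc]
          exact Q₁.mul_mem_left t key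
        rcases hQ₁.2 _ _ hall with h' | h'
        · have : s ∈ P₁ := by rw [← hover₁]; exact h'
          exact hs (h12.le this)
        · have : c ∈ Q₃ := by
            have := Q₃.add_mem (hQ.le h') (Q₃.mul_mem_left r (hfQ₃ (h23.le hu)))
            simpa using this
          exact hcQ₃ this
  -- Zorn's lemma
  set 𝒮 : Set (Ideal R) := {I | IsTwoSidedI I ∧ A₀ ≤ I ∧ ∀ m ∈ M, m ∉ I} with h𝒮def
  have hA₀mem : A₀ ∈ 𝒮 := ⟨hA₀ts, le_refl _, hA₀disj⟩
  obtain ⟨Q₂, hA₀Q₂, hmax⟩ := zorn_le_nonempty₀ 𝒮 (by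
    intro c hcsub hchain y hy
    have hmem : ∀ z : R, z ∈ sSup c ↔ ∃ I ∈ c, z ∈ I :=
      fun z => Submodule.mem_sSup_of_directed ⟨y, hy⟩ hchain.directedOn
    refine ⟨sSup c, ⟨?_, ?_, ?_⟩, fun z hz => le_sSup hz⟩
    · intro a ha r
      obtain ⟨I, hI, haI⟩ := (hmem a).mp ha
      exact (hmem _).mpr ⟨I, hI, (hcsub hI).1 a haI r⟩
    · exact le_trans (hcsub hy).2.1 (le_sSup hy)
    · intro m hm hmem'
      obtain ⟨I, hI, h⟩ := (hmem m).mp hmem'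
      exact (hcsub hI).2.2 m hm h) A₀ hA₀mem
  obtain ⟨hQ₂ts, hQ₂A₀, hdisj⟩ := hmax.1
  have hone₂ : (1 : R) ∉ Q₂ := hdisj 1 ⟨1, hone₃, Or.inl rfl⟩
  -- primeness of Q₂
  have hprime : IsPrimeNC Q₂ := by
    refine ⟨(Ideal.ne_top_iff_one Q₂).mpr hone₂, ?_⟩
    intro x y hxy
    by_contra hcon
    push_neg at hcon
    obtain ⟨hx, hy⟩ := hcon
    have key : ∀ w : R, w ∉ Q₂ → ∃ m ∈ M,
        m ∈ Q₂ ⊔ Ideal.span {z | ∃ a b : R, z = a * w * b} := by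
      intro w hw
      set J : Ideal R := Q₂ ⊔ Ideal.span {z | ∃ a b : R, z = a * w * b} with hJ
      have hspan_ts : ∀ ξ ∈ Ideal.span {z | ∃ a b : R, z = a * w * b}, ∀ r : R,
          ξ * r ∈ Ideal.span {z | ∃ a b : R, z = a * w * b} := by
        intro ξ hξ
        induction hξ using Submodule.span_induction with
        | mem z hz =>
          obtain ⟨a, b, rfl⟩ := hz
          intro r
          exact Ideal.subset_span ⟨a, b * r, by noncomm_ring⟩
        | zero =>
          intro r
          rw [zero_mul]; exact zero_mem _
        | add ξ₁ ξ₂ h₁ h₂ ih₁ ih₂ =>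
          intro r
          rw [add_mul]; exact add_mem (ih₁ r) (ih₂ r)
        | smul a ξ₁ h₁ ih =>
          intro r
          rw [smul_eq_mul, mul_assoc]
          exact Ideal.mul_mem_left _ a (ih r)
      have hJts : IsTwoSidedI J := by
        intro z hz r
        obtain ⟨qq, hqq, ξ, hξ, rfl⟩ := Submodule.mem_sup.mp hz
        rw [add_mul]
        exact add_mem (Submodule.mem_sup_left (hQ₂ts qq hqq r))
          (Submodule.mem_sup_right (hspan_ts ξ hξ r))
      have hwJ : w ∈ J := Submodule.mem_sup_right (Ideal.subset_span ⟨1, 1, by simp⟩)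
      by_contra hnone
      push_neg at hnone
      have hJmem : J ∈ 𝒮 := ⟨hJts, le_trans hQ₂A₀ le_sup_left, fun m hm hmJ => hnone m hm hmJ⟩
      exact hw (hmax.2 hJmem le_sup_left hwJ)
    obtain ⟨m₁, hm₁M, hm₁⟩ := key x hx
    obtain ⟨m₂, hm₂M, hm₂⟩ := key y hy
    obtain ⟨r, hrM⟩ := hM m₁ hm₁M m₂ hm₂M
    have claimInner : ∀ ξ ∈ Ideal.span {z | ∃ a b : R, z = a * y * b}, ∀ u : R,
        x * u * ξ ∈ Q₂ := by
      intro ξ hξ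
      induction hξ using Submodule.span_induction with
      | mem z hz =>
        obtain ⟨a, b, rfl⟩ := hz
        intro u
        have h : x * u * (a * y * b) = (x * (u * a) * y) * b := by noncomm_ring
        rw [h]
        exact hQ₂ts _ (hxy (u * a)) b
      | zero =>
        intro u
        rw [mul_zero]; exact zero_mem _
      | add ξ₁ ξ₂ h₁ h₂ ih₁ ih₂ =>
        intro u
        rw [mul_add]; exact add_mem (ih₁ u) (ih₂ u)
      | smul a ξ₁ h₁ ih =>
        intro u
        have h : x * u * (a • ξ₁) = x * (u * a) * ξ₁ := by
          rw [smul_eq_mul]; noncomm_ring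
        rw [h]
        exact ih (u * a)
    have claimOuter : ∀ ξ₁ ∈ Ideal.span {z | ∃ a b : R, z = a * x * b}, ∀ u : R,
        ∀ ξ₂ ∈ Ideal.span {z | ∃ a b : R, z = a * y * b}, ξ₁ * u * ξ₂ ∈ Q₂ := by
      intro ξ₁ hξ₁
      induction hξ₁ using Submodule.span_induction with
      | mem z hz =>
        obtain ⟨a, b, rfl⟩ := hz
        intro u ξ₂ hξ₂
        have h : a * x * b * u * ξ₂ = a * (x * (b * u) * ξ₂) := by noncomm_ring
        rw [h]
        exact Ideal.mul_mem_left _ a (claimInner ξ₂ hξ₂ (b * u))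
      | zero =>
        intro u ξ₂ hξ₂
        rw [zero_mul, zero_mul]; exact zero_mem _
      | add η₁ η₂ h₁ h₂ ih₁ ih₂ =>
        intro u ξ₂ hξ₂
        rw [add_mul, add_mul]
        exact add_mem (ih₁ u ξ₂ hξ₂) (ih₂ u ξ₂ hξ₂)
      | smul a η h₁ ih =>
        intro u ξ₂ hξ₂
        have h : (a • η) * u * ξ₂ = a * (η * u * ξ₂) := by
          rw [smul_eq_mul]; noncomm_ring
        rw [h]
        exact Ideal.mul_mem_left _ a (ih u ξ₂ hξ₂)
    obtain ⟨q₁, hq₁, ξ₁, hξ₁, rfl⟩ := Submodule.mem_sup.mp hm₁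
    obtain ⟨q₂, hq₂, ξ₂, hξ₂, rfl⟩ := Submodule.mem_sup.mp hm₂
    have hQ₂mem : (q₁ + ξ₁) * r * (q₂ + ξ₂) ∈ Q₂ := by
      have expand : (q₁ + ξ₁) * r * (q₂ + ξ₂) =
          q₁ * (r * q₂) + q₁ * (r * ξ₂) + ((ξ₁ * r) * q₂ + ξ₁ * r * ξ₂) := by noncomm_ring
      rw [expand]
      exact add_mem (add_mem (hQ₂ts q₁ hq₁ _) (hQ₂ts q₁ hq₁ _))
        (add_mem (Ideal.mul_mem_left _ _ hq₂) (claimOuter ξ₁ hξ₁ r ξ₂ hξ₂))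
    exact hdisj _ hrM hQ₂mem
  -- the contraction of Q₂ is P₂
  have hpre : preimageIdeal f Q₂ = P₂ := by
    apply le_antisymm
    · intro s hs
      by_contra hs2
      exact hdisj (f s) ⟨1, hone₃, Or.inr ⟨s, hs2, (mul_one _).symm⟩⟩ hs
    · intro p hp
      exact hQ₂A₀ ⟨0, Q₁.zero_mem, 1, p, hp, by simp⟩
  have hQ₂Q₃ : Q₂ ≤ Q₃ := by
    intro z hz
    by_contra hz3
    exact hdisj z ⟨z, hz3, Or.inl rfl⟩ hz
  refine ⟨Q₂, hQ₂ts, hprime, ?_, ?_, hpre⟩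
  · refine lt_of_le_of_ne (fun q hq => hQ₂A₀ ⟨q, hq, 0, 0, P₂.zero_mem, by simp⟩) ?_
    intro heq
    exact h12.ne (by rw [← hover₁, heq, hpre])
  · refine lt_of_le_of_ne hQ₂Q₃ ?_
    intro heq
    exact h23.ne (by rw [← hpre, heq, hover₃])
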